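/- For any subset S = {i_1 < ... < i_k} ⊆ {1, ..., ℓ-2} and t ∈ ℂ, the vector h ∈ ℂ^ℓ defined by h_{i_j} = i_j + 2 Σ_{s=j+1}^{k} (-1)^{s-j} i_s + (-1)^{k-j+1}(t + ℓ - 1) for j = 1,...,k, h_i = 0 for i ∈ {1,...,ℓ-2} \ S, h_{ℓ-1} = 0, h_ℓ = t, satisfies the polynomial equations h_i · (c_i(h) + ℓ - i - 1) = 0 for all i = 1, ..., ℓ-1, where c_i(h) = h_i + 2h_{i+1} + ... + 2h_{ℓ-2} + h_{ℓ-1} + h_ℓ for i < ℓ-1 and c_{ℓ-1}(h) = h_ℓ. -/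

import Mathlib

open Finset

lemma key_lemma (k : ℕ) (i : Fin k → ℕ) (L : ℂ) (h : ℕ → ℂ)
    (hS : ∀ j : Fin k,
        h (i j) = (i j : ℂ)
          + 2 * (∑ s ∈ univ.filter (fun s => j < s),
              (-1 : ℂ) ^ ((s : ℕ) - (j : ℕ)) * (i s : ℂ))
          + (-1 : ℂ) ^ (k - (j : ℕ)) * L) :
    ∀ j : Fin k, h (i j) + 2 * ∑ s ∈ univ.filter (fun s => j < s), h (i s)
      = (i j : ℂ) - L := by
  suffices H : ∀ d : ℕ, ∀ j : Fin k, (j : ℕ) + d + 1 = k →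
      h (i j) + 2 * ∑ s ∈ univ.filter (fun s => j < s), h (i s) = (i j : ℂ) - L by
    intro j
    exact H (k - (j : ℕ) - 1) j (by omega)
  intro d
  induction d with
  | zero =>
    intro j hj
    have hfe : univ.filter (fun s : Fin k => j < s) = ∅ := by
      ext s
      simp only [mem_filter, mem_univ, true_and, Fin.lt_def, notMem_empty, iff_false]
      omega
    have hexp : k - (j : ℕ) = 1 := by omega
    rw [hS j, hfe, hexp]
    simp
    ring
  | succ d ih =>
    intro j hj
    have hjk : (j : ℕ) + 1 < k := by omega
    set j' : Fin k := ⟨(j : ℕ) + 1, hjk⟩ with hj'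
    have hsplit : univ.filter (fun s : Fin k => j < s)
        = insert j' (univ.filter (fun s : Fin k => j' < s)) := by
      ext s
      simp only [mem_filter, mem_univ, true_and, mem_insert, Fin.lt_def, Fin.ext_iff, hj']
      omega
    have hnotmem : j' ∉ univ.filter (fun s : Fin k => j' < s) := by
      simp only [mem_filter, mem_univ, true_and, lt_irrefl, not_false_eq_true]
    have hih := ih j' (by simp [hj']; omega)
    -- relation between h (i j) and h (i j')
    have hSj := hS j
    have hSj' := hS j'
    -- alternating sum relation
    have hAsum : (∑ s ∈ univ.filter (fun s : Fin k => j < s),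
          (-1 : ℂ) ^ ((s : ℕ) - (j : ℕ)) * (i s : ℂ))
        = -(i j' : ℂ) - (∑ s ∈ univ.filter (fun s : Fin k => j' < s),
          (-1 : ℂ) ^ ((s : ℕ) - (j' : ℕ)) * (i s : ℂ)) := by
      rw [hsplit, sum_insert hnotmem]
      have h1 : ((j' : ℕ) - (j : ℕ)) = 1 := by simp [hj']
      rw [h1]
      have h2 : ∀ s ∈ univ.filter (fun s : Fin k => j' < s),
          (-1 : ℂ) ^ ((s : ℕ) - (j : ℕ)) * (i s : ℂ)
          = -((-1 : ℂ) ^ ((s : ℕ) - (j' : ℕ)) * (i s : ℂ)) := by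
        intro s hs
        simp only [mem_filter, mem_univ, true_and, Fin.lt_def] at hs
        have : (s : ℕ) - (j : ℕ) = ((s : ℕ) - (j' : ℕ)) + 1 := by simp [hj']; omega
        rw [this, pow_succ]
        ring
      rw [sum_congr rfl h2, sum_neg_distrib]
      ring
    have hsign : (-1 : ℂ) ^ (k - (j : ℕ)) = -((-1 : ℂ) ^ (k - (j' : ℕ))) := by
      have : k - (j : ℕ) = (k - (j' : ℕ)) + 1 := by simp [hj']; omega
      rw [this, pow_succ]; ring
    rw [hsplit, sum_insert hnotmem]
    have : h (i j) + h (i j') = (i j : ℂ) - (i j' : ℂ) := by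
      rw [hSj, hSj', hAsum, hsign]; ring
    linear_combination this + hih

/-- For a subset `S = {i_1 < ... < i_k} ⊆ {1, ..., ℓ-2}` and `t ∈ ℂ`, the vector
`h ∈ ℂ^ℓ` (written as a function on the indices `1, ..., ℓ`) defined by
`h_{i_j} = i_j + 2 Σ_{s=j+1}^{k} (-1)^{s-j} i_s + (-1)^{k-j+1}(t + ℓ - 1)`, `h_i = 0` for
`i ∈ {1,...,ℓ-2} \ S`, `h_{ℓ-1} = 0`, `h_ℓ = t`, satisfies the equations
`h_i · (c_i(h) + ℓ - i - 1) = 0` for `i = 1, ..., ℓ-1`, where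
`c_i(h) = h_i + 2 Σ_{m=i+1}^{ℓ-2} h_m + h_{ℓ-1} + h_ℓ` for `i ≤ ℓ-2` and `c_{ℓ-1}(h) = h_ℓ`. -/
theorem stmt1_explicit_solutions_satisfy_polynomial_equations
    (ℓ : ℕ) (hℓ : 3 ≤ ℓ) (k : ℕ) (i : Fin k → ℕ) (hmono : StrictMono i)
    (hbound : ∀ j, 1 ≤ i j ∧ i j ≤ ℓ - 2)
    (t : ℂ) (h : ℕ → ℂ)
    (hS : ∀ j : Fin k,
        h (i j) = (i j : ℂ)
          + 2 * (∑ s ∈ univ.filter (fun s => j < s),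
              (-1 : ℂ) ^ ((s : ℕ) - (j : ℕ)) * (i s : ℂ))
          + (-1 : ℂ) ^ (k - (j : ℕ)) * (t + (ℓ : ℂ) - 1))
    (hzero : ∀ m, 1 ≤ m → m ≤ ℓ - 2 → (∀ j : Fin k, i j ≠ m) → h m = 0)
    (hlast : h (ℓ - 1) = 0) (hℓval : h ℓ = t) :
    ∀ m, 1 ≤ m → m ≤ ℓ - 1 →
      h m * ((if m ≤ ℓ - 2 then
                h m + 2 * (∑ x ∈ Icc (m + 1) (ℓ - 2), h x) + h (ℓ - 1) + h ℓ
              else h ℓ)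
             + (ℓ : ℂ) - (m : ℂ) - 1) = 0 := by
  intro m h1 h2
  by_cases hm2 : m ≤ ℓ - 2
  · rw [if_pos hm2]
    by_cases hne : ∀ j : Fin k, i j ≠ m
    · rw [hzero m h1 hm2 hne]; ring
    · push_neg at hne
      obtain ⟨j, hjm⟩ := hne
      subst hjm
      have hsum : ∑ x ∈ Icc (i j + 1) (ℓ - 2), h x
          = ∑ s ∈ univ.filter (fun s : Fin k => j < s), h (i s) := by
        have hinj : ∀ a ∈ univ.filter (fun s : Fin k => j < s),
            ∀ b ∈ univ.filter (fun s : Fin k => j < s), i a = i b → a = b :=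
          fun a _ b _ hab => hmono.injective hab
        rw [← Finset.sum_image hinj]
        refine (Finset.sum_subset ?_ ?_).symm
        · intro x hx
          simp only [mem_image, mem_filter, mem_univ, true_and] at hx
          obtain ⟨s, hjs, rfl⟩ := hx
          have := (hbound s).2
          have hlt : i j < i s := hmono hjs
          simp only [mem_Icc]
          omega
        · intro x hx hnx
          simp only [mem_Icc] at hx
          refine hzero x (by omega) (by omega) ?_
          intro s hsx
          apply hnx
          simp only [mem_image, mem_filter, mem_univ, true_and]
          refine ⟨s, ?_, hsx⟩
          have : i j < i s := by omega
          exact hmono.lt_iff_lt.mp this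
      have hkey := key_lemma k i (t + (ℓ : ℂ) - 1) h hS j
      rw [hsum, hlast, hℓval]
      linear_combination h (i j) * hkey
  · rw [if_neg hm2]
    have hm : m = ℓ - 1 := by omega
    rw [hm, hlast]
    ring
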